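/- Let ν satisfy x·ν·(1−ν) = ν + y·(1−ν). Define f_{ASM}(u,v) = (1−ν)/(1−uv) + ν/(1 − xu − v − (y−x)uv) and f_{DPP}(u,v) = 1/(1−uv) + (1/(1−u))·(yu)/(1 − xu − v − (y−x)uv). Then as an identity of formal power series in u and v over ℚ(x,y)(ν): (1 − u/(1−ν))·(1−v)·f_{ASM}(u,v) = (1−u)·(1 − (1−ν)v)·f_{DPP}(u,v). -/

import Mathlib

open MvPowerSeries

/-- The key relation between the ASM and DPP generating functions: if
`xν(1-ν) = ν + y(1-ν)` then
`(1 - u/(1-ν))(1-v) f_ASM(u,v) = (1-u)(1-(1-ν)v) f_DPP(u,v)`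
as formal power series in `u, v`. -/
theorem asm_dpp_generating_function_relation {K : Type*} [Field K]
    (x y ν : K) (hν : (1 : K) - ν ≠ 0)
    (hrel : x * ν * (1 - ν) = ν + y * (1 - ν)) :
    let u : MvPowerSeries (Fin 2) K := MvPowerSeries.X 0
    let v : MvPowerSeries (Fin 2) K := MvPowerSeries.X 1
    let C : K → MvPowerSeries (Fin 2) K := MvPowerSeries.C
    let fASM : MvPowerSeries (Fin 2) K :=
      C (1 - ν) * (1 - u * v)⁻¹ +
        C ν * (1 - C x * u - v - C (y - x) * (u * v))⁻¹
    let fDPP : MvPowerSeries (Fin 2) K :=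
      (1 - u * v)⁻¹ +
        (1 - u)⁻¹ * (C y * u) * (1 - C x * u - v - C (y - x) * (u * v))⁻¹
    (1 - u * C ((1 - ν)⁻¹)) * (1 - v) * fASM = (1 - u) * (1 - C (1 - ν) * v) * fDPP := by
  intro u v C fASM fDPP
  show (1 - MvPowerSeries.X 0 * (MvPowerSeries.C (σ := Fin 2) (R := K)) ((1 - ν)⁻¹)) *
        (1 - MvPowerSeries.X 1) *
        ((MvPowerSeries.C (σ := Fin 2) (R := K)) (1 - ν) *
            (1 - MvPowerSeries.X 0 * MvPowerSeries.X 1)⁻¹ +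
          (MvPowerSeries.C (σ := Fin 2) (R := K)) ν *
            (1 - (MvPowerSeries.C (σ := Fin 2) (R := K)) x * MvPowerSeries.X 0 - MvPowerSeries.X 1 -
                (MvPowerSeries.C (σ := Fin 2) (R := K)) (y - x) *
                  (MvPowerSeries.X 0 * MvPowerSeries.X 1))⁻¹) =
      (1 - MvPowerSeries.X 0) *
        (1 - (MvPowerSeries.C (σ := Fin 2) (R := K)) (1 - ν) * MvPowerSeries.X 1) *
        ((1 - MvPowerSeries.X 0 * MvPowerSeries.X 1)⁻¹ +
          (1 - MvPowerSeries.X 0)⁻¹ * ((MvPowerSeries.C (σ := Fin 2) (R := K)) y * MvPowerSeries.X 0) *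
            (1 - (MvPowerSeries.C (σ := Fin 2) (R := K)) x * MvPowerSeries.X 0 - MvPowerSeries.X 1 -
                (MvPowerSeries.C (σ := Fin 2) (R := K)) (y - x) *
                  (MvPowerSeries.X 0 * MvPowerSeries.X 1))⁻¹)
  clear_value u v C fASM fDPP
  clear fASM fDPP u v C
  set U : MvPowerSeries (Fin 2) K := MvPowerSeries.X 0 with hU
  set V : MvPowerSeries (Fin 2) K := MvPowerSeries.X 1 with hV
  set Cc : K →+* MvPowerSeries (Fin 2) K := (MvPowerSeries.C (σ := Fin 2) (R := K)) with hCc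
  -- rewrite the constants of differences
  have hN : Cc (1 - ν) = 1 - Cc ν := by rw [map_sub, map_one]
  have hyx : Cc (y - x) = Cc y - Cc x := map_sub _ _ _
  rw [hN, hyx]
  set W : MvPowerSeries (Fin 2) K := Cc ((1 - ν)⁻¹) with hW
  set M : MvPowerSeries (Fin 2) K := Cc ν with hM
  set P : MvPowerSeries (Fin 2) K := 1 - U * V with hP'
  set Q : MvPowerSeries (Fin 2) K := 1 - Cc x * U - V - (Cc y - Cc x) * (U * V) with hQ'
  set R : MvPowerSeries (Fin 2) K := 1 - U with hR'
  have hcU : constantCoeff (σ := Fin 2) (R := K) U = 0 := constantCoeff_X 0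
  have hcV : constantCoeff (σ := Fin 2) (R := K) V = 0 := constantCoeff_X 1
  have hP : P * P⁻¹ = 1 := MvPowerSeries.mul_inv_cancel _ (by
    simp [hP', hcU, hcV])
  have hQ : Q * Q⁻¹ = 1 := MvPowerSeries.mul_inv_cancel _ (by
    simp [hQ', hcU, hcV])
  have hR : R * R⁻¹ = 1 := MvPowerSeries.mul_inv_cancel _ (by
    simp [hR', hcU])
  have hs : W * (1 - M) = 1 := by
    rw [hW, hM, ← map_one Cc, ← map_sub, ← map_mul, inv_mul_cancel₀ hν]
  have hC : Cc x * M * (1 - M) = M + Cc y * (1 - M) := by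
    rw [hM, ← map_one Cc, ← map_sub, ← map_mul, ← map_mul, ← map_mul, ← map_add, hrel]
  have hD : IsUnit (P * Q * R) :=
    IsUnit.of_mul_eq_one (R⁻¹ * Q⁻¹ * P⁻¹) (by
      calc P * Q * R * (R⁻¹ * Q⁻¹ * P⁻¹)
          = (P * P⁻¹) * (Q * Q⁻¹) * (R * R⁻¹) := by ring
        _ = 1 := by rw [hP, hQ, hR]; ring)
  have e1 : P * Q * R * ((1 - M) * P⁻¹ + M * Q⁻¹)
      = Q * R * (1 - M) + P * R * M := by
    linear_combination (Q * R * (1 - M)) * hP + (P * R * M) * hQ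
  have e2 : P * Q * R * (P⁻¹ + R⁻¹ * (Cc y * U) * Q⁻¹)
      = Q * R + P * (Cc y * U) := by
    linear_combination (Q * R) * hP + (P * (Cc y * U) * (R * R⁻¹)) * hQ +
      (P * (Cc y * U)) * hR
  refine hD.mul_left_cancel ?_
  have hFdef : (1 - U * W) * (1 - V) * ((1 - M) * Q + M * P)
        - (1 - (1 - M) * V) * ((1 - U) * Q + Cc y * U * P)
      = W * (U * (1 - V) * P) *
          ((Cc x * M * (1 - M)) - (M + Cc y * (1 - M)))
        + (W * (-(U * (1 - V) * ((1 - M) * Q + M * P)))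
            - ((1 - U * W) * (1 - V) * ((1 - M) * Q + M * P)
              - (1 - (1 - M) * V) * ((1 - U) * Q + Cc y * U * P))) *
          (W * (1 - M) - 1) := by
    ring
  have hF0 : (1 - U * W) * (1 - V) * ((1 - M) * Q + M * P)
      = (1 - (1 - M) * V) * ((1 - U) * Q + Cc y * U * P) := by
    have h1 : Cc x * M * (1 - M) - (M + Cc y * (1 - M)) = 0 := by
      rw [hC]; ring
    have h2 : W * (1 - M) - 1 = 0 := sub_eq_zero.mpr hs
    rw [h1, h2, mul_zero, mul_zero, add_zero] at hFdef
    exact sub_eq_zero.mp hFdef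
  calc P * Q * R * ((1 - U * W) * (1 - V) * ((1 - M) * P⁻¹ + M * Q⁻¹))
      = (1 - U * W) * (1 - V) * (P * Q * R * ((1 - M) * P⁻¹ + M * Q⁻¹)) := by ring
    _ = (1 - U * W) * (1 - V) * (Q * R * (1 - M) + P * R * M) := by rw [e1]
    _ = R * ((1 - U * W) * (1 - V) * ((1 - M) * Q + M * P)) := by ring
    _ = R * ((1 - (1 - M) * V) * ((1 - U) * Q + Cc y * U * P)) := by rw [hF0]
    _ = (1 - U) * (1 - (1 - M) * V) * (Q * R + P * (Cc y * U)) := by ring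
    _ = (1 - U) * (1 - (1 - M) * V) *
          (P * Q * R * (P⁻¹ + R⁻¹ * (Cc y * U) * Q⁻¹)) := by rw [e2]
    _ = P * Q * R *
          ((1 - U) * (1 - (1 - M) * V) * (P⁻¹ + R⁻¹ * (Cc y * U) * Q⁻¹)) := by ring
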